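/- Let k be an algebraically closed field of characteristic p > 0, G a finite group, H a normal subgroup of G, and V a finite-dimensional kG-module that is absolutely irreducible as a kH-module, with p not dividing dim V. If H^1(G,k) = 0 and H^1(H, W) = 0, where W is the trace-zero part of End(V), then Ext^1_G(V,V) = 0. -/

import Mathlib

lemma schur_aux {k : Type} [Field k] [IsAlgClosed k]
    {G : Type} [Group G] (H : Subgroup G)
    {V : Type} [AddCommGroup V] [Module k V] [FiniteDimensional k V] [Nontrivial V]
    (ρ : Representation k G V)
    (hirrH : ∀ U : Submodule k V, (∀ h : H, U.map (ρ h) ≤ U) → U = ⊥ ∨ U = ⊤)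
    (e : V →ₗ[k] V) (hcomm : ∀ h : H, ρ h ∘ₗ e = e ∘ₗ ρ h) :
    ∃ c : k, ∀ v : V, e v = c • v := by
  obtain ⟨c, hc⟩ := Module.End.exists_eigenvalue e
  refine ⟨c, fun v => ?_⟩
  have hinv : ∀ h : H, (Module.End.eigenspace e c).map (ρ h) ≤ Module.End.eigenspace e c := by
    intro h x hx
    obtain ⟨y, hy, rfl⟩ := hx
    rw [SetLike.mem_coe, Module.End.mem_eigenspace_iff] at hy
    rw [Module.End.mem_eigenspace_iff]
    have := congrArg (fun F => F y) (hcomm h)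
    simp only [LinearMap.comp_apply] at this
    rw [← this, hy, map_smul]
  rcases hirrH _ hinv with h0 | htop
  · exact absurd h0 hc
  · have : v ∈ Module.End.eigenspace e c := htop ▸ Submodule.mem_top
    exact Module.End.mem_eigenspace_iff.mp this

lemma h1_subsingleton_iff {k G : Type} [Field k] [Group G] (A : Rep k G) :
    Subsingleton (groupCohomology.H1 A) ↔
      ∀ x : groupCohomology.cocycles₁ A, (x : G → A) ∈ groupCohomology.coboundaries₁ A := by
  constructor
  · intro hs x
    rw [← groupCohomology.H1π_eq_zero_iff]
    exact Subsingleton.elim _ _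
  · intro h
    have h0 : ∀ a : groupCohomology.H1 A, a = 0 := fun a =>
      groupCohomology.H1_induction_on a fun x => (groupCohomology.H1π_eq_zero_iff x).2 (h x)
    exact ⟨fun a b => (h0 a).trans (h0 b).symm⟩

/-- The conjugation representation of `G` on the space of trace-zero endomorphisms of `V`. -/
noncomputable def tracelessRep {k G V : Type} [Field k] [Group G]
    [AddCommGroup V] [Module k V] [FiniteDimensional k V] (ρ : Representation k G V) :
    Representation k G (LinearMap.ker (LinearMap.trace k V)) where
  toFun g := LinearMap.restrict ((ρ.linHom ρ) g)
    (p := LinearMap.ker (LinearMap.trace k V)) (q := LinearMap.ker (LinearMap.trace k V))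
    (fun f hf => by
      simp only [LinearMap.mem_ker] at *
      show LinearMap.trace k V (ρ g ∘ₗ f ∘ₗ ρ g⁻¹) = 0
      rw [← Module.End.mul_eq_comp, ← Module.End.mul_eq_comp, LinearMap.trace_mul_comm,
        mul_assoc, ← map_mul, inv_mul_cancel, map_one, mul_one, hf])
  map_one' := by
    ext x
    simp [LinearMap.restrict_coe_apply]
  map_mul' g₁ g₂ := by
    ext x
    simp [LinearMap.restrict_coe_apply]

/-- If `V` is a `kG`-module that is absolutely irreducible over a normal subgroup `H`, with
`p ∤ dim V`, `H¹(G,k) = 0` and `H¹(H,W) = 0` for the trace-zero part `W` of `End(V)`, then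
`Ext¹_G(V,V) ≅ H¹(G, V* ⊗ V) = 0`. -/
theorem stmt4 {k : Type} [Field k] [IsAlgClosed k] {p : ℕ} [Fact p.Prime] [CharP k p]
    {G : Type} [Group G] [Finite G] (H : Subgroup G) [H.Normal]
    {V : Type} [AddCommGroup V] [Module k V] [FiniteDimensional k V]
    (ρ : Representation k G V)
    (hirrH : ∀ U : Submodule k V, (∀ h : H, U.map (ρ h) ≤ U) → U = ⊥ ∨ U = ⊤)
    (hdim : ¬ p ∣ Module.finrank k V)
    (h2 : Subsingleton (groupCohomology.H1 (Rep.trivial k G k)))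
    (h1H : Subsingleton (groupCohomology.H1 (Rep.of (tracelessRep (ρ.comp H.subtype))))) :
    Subsingleton (groupCohomology.H1 (Rep.of (ρ.linHom ρ))) := by
  classical
  have hn0 : Module.finrank k V ≠ 0 := fun h => hdim (h ▸ dvd_zero p)
  have hnk : (Module.finrank k V : k) ≠ 0 := by
    rw [Ne, CharP.cast_eq_zero_iff k p]; exact hdim
  haveI : Nontrivial V := Module.nontrivial_of_finrank_pos (R := k) (Nat.pos_of_ne_zero hn0)
  rw [h1_subsingleton_iff] at h2 h1H ⊢
  intro f
  set F : G → (V →ₗ[k] V) := fun g => f.1 g with hF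
  have fc : ∀ g h : G, F (g * h) = (ρ.linHom ρ) g (F h) + F g := fun g h =>
    (groupCohomology.mem_cocycles₁_iff (A := Rep.of (ρ.linHom ρ)) f.1).1 f.2 g h
  -- Step 1: trace of f vanishes
  have trace_conj : ∀ (g : G) (e : V →ₗ[k] V),
      LinearMap.trace k V ((ρ.linHom ρ) g e) = LinearMap.trace k V e := by
    intro g e
    show LinearMap.trace k V (ρ g ∘ₗ e ∘ₗ ρ g⁻¹) = _
    rw [← Module.End.mul_eq_comp, ← Module.End.mul_eq_comp, LinearMap.trace_mul_comm,
      mul_assoc, ← map_mul, inv_mul_cancel, map_one, mul_one]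
  have htr : ∀ g : G, LinearMap.trace k V (F g) = 0 := by
    have ht : (fun g => LinearMap.trace k V (F g)) ∈
        groupCohomology.cocycles₁ (Rep.trivial k G k) := by
      rw [groupCohomology.mem_cocycles₁_iff]
      intro g h
      rw [fc g h, map_add, trace_conj]
      show _ = (Rep.trivial k G k).ρ g _ + _
      rw [Rep.trivial_ρ_apply]
    have hbot : groupCohomology.coboundaries₁ (Rep.trivial k G k) = ⊥ :=
      groupCohomology.coboundaries₁_eq_bot_of_isTrivial _
    have hz : (fun g => LinearMap.trace k V (F g)) = 0 := by
      have := h2 ⟨_, ht⟩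
      rwa [hbot, Submodule.mem_bot] at this
    intro g
    exact congrFun hz g
  -- Step 2: restriction to H is a coboundary
  have hfH : (fun h : H => (⟨F h.1, by rw [LinearMap.mem_ker]; exact htr h.1⟩ :
      LinearMap.ker (LinearMap.trace k V))) ∈
      groupCohomology.cocycles₁ (Rep.of (tracelessRep (ρ.comp H.subtype))) := by
    rw [groupCohomology.mem_cocycles₁_iff]
    intro g h
    refine Subtype.ext ?_
    show F (g.1 * h.1) = _
    rw [fc g.1 h.1]
    rfl
  obtain ⟨w, hw⟩ := h1H ⟨_, hfH⟩
  have hwH : ∀ h : H, (ρ.linHom ρ) h.1 w.1 - w.1 = F h.1 := by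
    intro h
    exact congrArg Subtype.val (congrFun hw h)
  -- Step 3: the modified cocycle
  set f2 : G → (V →ₗ[k] V) :=
    fun g => F g - ((ρ.linHom ρ) g w.1 - w.1) with hf2
  have f2c : ∀ g h : G, f2 (g * h) = (ρ.linHom ρ) g (f2 h) + f2 g := by
    intro g h
    simp only [hf2, fc g h, map_mul, map_sub, Module.End.mul_apply]
    abel
  have f2H : ∀ h : H, f2 h.1 = 0 := by
    intro h
    simp only [hf2, ← hwH h]
    abel
  have f2comm : ∀ (g : G) (h : H), (ρ.linHom ρ) h.1 (f2 g) = f2 g := by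
    intro g h
    have h' : g⁻¹ * h.1 * g ∈ H := by
      have := Subgroup.Normal.conj_mem ‹H.Normal› h.1 h.2 g⁻¹
      simpa using this
    have e1 : f2 (h.1 * g) = (ρ.linHom ρ) h.1 (f2 g) := by
      rw [f2c h.1 g, f2H h, add_zero]
    have e2 : f2 (g * (g⁻¹ * h.1 * g)) = f2 g := by
      rw [f2c g (g⁻¹ * h.1 * g), f2H ⟨_, h'⟩, map_zero, zero_add]
    have e3 : h.1 * g = g * (g⁻¹ * h.1 * g) := by group
    rw [← e1, e3, e2]
  have f2tr : ∀ g : G, LinearMap.trace k V (f2 g) = 0 := by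
    intro g
    simp only [hf2, map_sub, htr g, trace_conj, sub_self, sub_zero]
  -- Step 4: Schur – f2 g = 0
  have f2zero : ∀ g : G, f2 g = 0 := by
    intro g
    have hcomm : ∀ h : H, ρ h.1 ∘ₗ f2 g = f2 g ∘ₗ ρ h.1 := by
      intro h
      have h2' : ρ h.1 * f2 g * ρ (h.1)⁻¹ = f2 g := f2comm g h
      have h3 := congrArg (fun x => x * ρ h.1) h2'
      simp only [mul_assoc, ← map_mul, inv_mul_cancel, map_one, mul_one] at h3
      exact h3
    obtain ⟨c, hcv⟩ := schur_aux H ρ hirrH (f2 g) hcomm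
    have heq : f2 g = c • LinearMap.id := by
      ext v; simpa using hcv v
    have htrc : LinearMap.trace k V (f2 g) = c * Module.finrank k V := by
      rw [heq, map_smul, LinearMap.trace_id, smul_eq_mul]
    rw [f2tr g] at htrc
    have hc0 : c = 0 := by
      rcases mul_eq_zero.1 htrc.symm with h | h
      · exact h
      · exact absurd h hnk
    rw [heq, hc0, zero_smul]
  -- conclude
  refine ⟨w.1, funext fun g => ?_⟩
  have hz := f2zero g
  rw [hf2] at hz
  exact (sub_eq_zero.1 hz).symm
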